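/- Let (g_j)_{j∈ℤ} be a ℤ-grading of g = q(N) such that the central element (I_N, 0) lies in g₀. Then the odd element C = (0, I_N) also lies in g₀. -/

import Mathlib

/-- The queer Lie superalgebra `q(N)` realized as pairs `(S, S')` of `N × N` complex
matrices, with bracket
`[(S₁,S₁'),(S₂,S₂')] = (S₁S₂ − S₂S₁ + S₁'S₂' + S₂'S₁', S₁S₂' − S₂'S₁ + S₁'S₂ − S₂S₁')`. -/
noncomputable def qBracket {N : ℕ} (x y : Matrix (Fin N) (Fin N) ℂ × Matrix (Fin N) (Fin N) ℂ) :
    Matrix (Fin N) (Fin N) ℂ × Matrix (Fin N) (Fin N) ℂ :=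
  (x.1 * y.1 - y.1 * x.1 + x.2 * y.2 + y.2 * x.2,
   x.1 * y.2 - y.2 * x.1 + x.2 * y.1 - y.1 * x.2)

open Polynomial in
/-- Linear independence of integer powers of `X` in `RatFunc ℂ` over constants. -/
lemma ratfunc_ext (s : Finset ℤ) (c : ℤ → ℂ) (d : ℂ)
    (h : ∑ j ∈ s, RatFunc.C (c j) * (RatFunc.X : RatFunc ℂ) ^ j = RatFunc.C d) :
    (∀ j ∈ s, j ≠ 0 → c j = 0) ∧ d = ∑ j ∈ s, c j := by
  classical
  set m : ℕ := s.sup (fun j => (-j).toNat) with hm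
  have hjm : ∀ j ∈ s, (0:ℤ) ≤ j + m := by
    intro j hj
    have h1 : (-j).toNat ≤ m := Finset.le_sup (f := fun j => (-j).toNat) hj
    have h2 : -j ≤ ((-j).toNat : ℤ) := Int.self_le_toNat _
    omega
  have hXne : (RatFunc.X : RatFunc ℂ) ≠ 0 := RatFunc.X_ne_zero
  -- multiply by X^m
  have h2 : ∑ j ∈ s, RatFunc.C (c j) * (RatFunc.X : RatFunc ℂ) ^ ((j + m).toNat)
      = RatFunc.C d * RatFunc.X ^ m := by
    have := congrArg (· * (RatFunc.X : RatFunc ℂ) ^ (m:ℤ)) h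
    simp only [Finset.sum_mul] at this
    calc ∑ j ∈ s, RatFunc.C (c j) * (RatFunc.X : RatFunc ℂ) ^ ((j + m).toNat)
        = ∑ j ∈ s, RatFunc.C (c j) * (RatFunc.X : RatFunc ℂ) ^ (j:ℤ) * RatFunc.X ^ (m:ℤ) := by
          refine Finset.sum_congr rfl fun j hj => ?_
          rw [mul_assoc, ← zpow_add₀ hXne, ← zpow_natCast (RatFunc.X : RatFunc ℂ)
            ((j + m).toNat), Int.toNat_of_nonneg (hjm j hj)]
      _ = RatFunc.C d * RatFunc.X ^ (m:ℤ) := this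
      _ = RatFunc.C d * RatFunc.X ^ m := by rw [zpow_natCast]
  -- pull back to polynomials
  set p : ℂ[X] := ∑ j ∈ s, Polynomial.C (c j) * X ^ ((j + m).toNat) with hp
  set q : ℂ[X] := Polynomial.C d * X ^ m with hq
  have hpq : p = q := by
    apply RatFunc.algebraMap_injective ℂ
    rw [hp, hq, map_sum, map_mul, map_pow, RatFunc.algebraMap_C, RatFunc.algebraMap_X]
    rw [← h2]
    refine Finset.sum_congr rfl fun j hj => ?_
    rw [map_mul, map_pow, RatFunc.algebraMap_C, RatFunc.algebraMap_X]
  have hinj : ∀ j ∈ s, ∀ j' ∈ s, (j + m).toNat = (j' + m).toNat → j = j' := by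
    intro j hj j' hj' hh
    have := congrArg (Nat.cast (R := ℤ)) hh
    rwa [Int.toNat_of_nonneg (hjm j hj), Int.toNat_of_nonneg (hjm j' hj'),
      add_left_inj] at this
  constructor
  · intro j0 hj0 hj0ne
    have hc := congrArg (fun r => Polynomial.coeff r ((j0 + m).toNat)) hpq
    simp only [hp, hq, Polynomial.finset_sum_coeff, Polynomial.coeff_C_mul,
      Polynomial.coeff_X_pow] at hc
    rw [Finset.sum_eq_single j0 (fun j hj hne => by
        rw [if_neg, mul_zero]
        intro heq
        exact hne ((hinj j0 hj0 j hj heq).symm)) (fun h => absurd hj0 h)] at hc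
    rw [if_pos rfl, mul_one] at hc
    have hne : (j0 + m).toNat ≠ m := by
      intro heq
      have := congrArg (Nat.cast (R := ℤ)) heq
      rw [Int.toNat_of_nonneg (hjm j0 hj0)] at this
      omega
    rw [if_neg hne, mul_zero] at hc
    exact hc
  · have he := congrArg (Polynomial.eval 1) hpq
    simp only [hp, hq, Polynomial.eval_finset_sum, Polynomial.eval_mul, Polynomial.eval_pow,
      Polynomial.eval_C, Polynomial.eval_X, one_pow, mul_one] at he
    exact he.symm

/-- An idempotent matrix over a field has natural-number trace (= rank), and if
that number is zero the matrix is zero. -/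
lemma idem_trace {K : Type*} [Field K] {n : ℕ} {E : Matrix (Fin n) (Fin n) K}
    (h : E * E = E) :
    ∃ r : ℕ, Matrix.trace E = (r : K) ∧ (r = 0 → E = 0) := by
  classical
  set f : (Fin n → K) →ₗ[K] (Fin n → K) := Matrix.toLin' E with hf
  have hff : ∀ x, f (f x) = f x := by
    intro x
    have : f ∘ₗ f = f := by rw [hf, ← Matrix.toLin'_mul, h]
    exact congrFun (congrArg (fun g => g.toFun) this) x
  have hproj : LinearMap.IsProj (LinearMap.range f) f := by
    refine ⟨fun x => LinearMap.mem_range_self f x, ?_⟩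
    rintro x ⟨y, rfl⟩
    exact hff y
  refine ⟨Module.finrank K (LinearMap.range f), ?_, ?_⟩
  · have ht : LinearMap.trace K (Fin n → K) f = (Module.finrank K (LinearMap.range f) : K) :=
      hproj.trace
    rw [← ht, hf, LinearMap.trace_eq_matrix_trace K (Pi.basisFun K (Fin n)),
      LinearMap.toMatrix_eq_toMatrix', LinearMap.toMatrix'_toLin']
  · intro hr
    have hbot : LinearMap.range f = ⊥ := Submodule.finrank_eq_zero.mp hr
    have hf0 : f = 0 := LinearMap.range_eq_bot.mp hbot
    have := congrArg (LinearMap.toMatrix' (R := K)) hf0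
    rwa [hf, LinearMap.toMatrix'_toLin', show (LinearMap.toMatrix' (R := K) (0 : (Fin n → K) →ₗ[K] Fin n → K)) = 0 from LinearEquiv.map_zero _] at this

lemma qBracket_add_left {N : ℕ} (x y z : Matrix (Fin N) (Fin N) ℂ × Matrix (Fin N) (Fin N) ℂ) :
    qBracket (x + y) z = qBracket x z + qBracket y z := by
  unfold qBracket
  apply Prod.ext <;> simp [Prod.fst_add, Prod.snd_add] <;> noncomm_ring

lemma qBracket_add_right {N : ℕ} (x y z : Matrix (Fin N) (Fin N) ℂ × Matrix (Fin N) (Fin N) ℂ) :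
    qBracket x (y + z) = qBracket x y + qBracket x z := by
  unfold qBracket
  apply Prod.ext <;> simp [Prod.fst_add, Prod.snd_add] <;> noncomm_ring

lemma qBracket_sum_sum {N : ℕ} (s t : Finset ℤ)
    (f h : ℤ → Matrix (Fin N) (Fin N) ℂ × Matrix (Fin N) (Fin N) ℂ) :
    qBracket (∑ i ∈ s, f i) (∑ j ∈ t, h j)
      = ∑ i ∈ s, ∑ j ∈ t, qBracket (f i) (h j) := by
  have h1 : ∀ (y : Matrix (Fin N) (Fin N) ℂ × Matrix (Fin N) (Fin N) ℂ),
      qBracket (∑ i ∈ s, f i) y = ∑ i ∈ s, qBracket (f i) y := fun y =>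
    map_sum (AddMonoidHom.mk' (fun x => qBracket x y)
      (fun a b => qBracket_add_left a b y)) f s
  have h2 : ∀ i, qBracket (f i) (∑ j ∈ t, h j) = ∑ j ∈ t, qBracket (f i) (h j) := fun i =>
    map_sum (AddMonoidHom.mk' (fun y => qBracket (f i) y)
      (fun a b => qBracket_add_right (f i) a b)) h t
  rw [h1]
  exact Finset.sum_congr rfl fun i _ => h2 i

/-- Uniqueness of homogeneous decomposition. -/
lemma homog_unique {N : ℕ}
    (g : ℤ → Submodule ℂ (Matrix (Fin N) (Fin N) ℂ × Matrix (Fin N) (Fin N) ℂ))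
    (hinternal : DirectSum.IsInternal g)
    (t : Finset ℤ) (x : ℤ → Matrix (Fin N) (Fin N) ℂ × Matrix (Fin N) (Fin N) ℂ)
    (hx : ∀ j, x j ∈ g j) (k : ℤ)
    (w : Matrix (Fin N) (Fin N) ℂ × Matrix (Fin N) (Fin N) ℂ) (hw : w ∈ g k)
    (hsum : ∑ j ∈ t, x j = w) :
    ∀ j ∈ t, j ≠ k → x j = 0 := by
  classical
  have hb : (∑ j ∈ t, DirectSum.of (fun i => (g i : Type _)) j ⟨x j, hx j⟩)
      = DirectSum.of (fun i => (g i : Type _)) k ⟨w, hw⟩ := by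
    apply hinternal.1
    rw [map_sum, DirectSum.coeAddMonoidHom_of]
    simp only [DirectSum.coeAddMonoidHom_of]
    exact hsum
  intro j hj hjk
  have hcomp := DFinsupp.ext_iff.mp hb j
  rw [DFinsupp.finset_sum_apply, DirectSum.of_eq_of_ne _ _ _ hjk] at hcomp
  have hone : ∑ a ∈ t, ((DirectSum.of (fun i => (g i : Type _)) a ⟨x a, hx a⟩) j)
      = (DirectSum.of (fun i => (g i : Type _)) j ⟨x j, hx j⟩) j :=
    Finset.sum_eq_single_of_mem j hj (fun i _ hij => DirectSum.of_eq_of_ne _ _ _ (Ne.symm hij))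
  rw [hone, DirectSum.of_eq_same] at hcomp
  exact Subtype.ext_iff.mp hcomp


set_option maxHeartbeats 1000000 in
set_option synthInstance.maxHeartbeats 200000 in
theorem stmt1 {N : ℕ}
    (g : ℤ → Submodule ℂ (Matrix (Fin N) (Fin N) ℂ × Matrix (Fin N) (Fin N) ℂ))
    (hfin : {j : ℤ | g j ≠ ⊥}.Finite)
    (hinternal : DirectSum.IsInternal g)
    (hbracket : ∀ i j : ℤ, ∀ x ∈ g i, ∀ y ∈ g j, qBracket x y ∈ g (i + j))
    (hcompat : ∀ j : ℤ, ∀ x ∈ g j,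
      ((x.1, 0) : Matrix (Fin N) (Fin N) ℂ × Matrix (Fin N) (Fin N) ℂ) ∈ g j)
    (hcenter : (((1 : Matrix (Fin N) (Fin N) ℂ), (0 : Matrix (Fin N) (Fin N) ℂ)) :
      Matrix (Fin N) (Fin N) ℂ × Matrix (Fin N) (Fin N) ℂ) ∈ g 0) :
    (((0 : Matrix (Fin N) (Fin N) ℂ), (1 : Matrix (Fin N) (Fin N) ℂ)) :
      Matrix (Fin N) (Fin N) ℂ × Matrix (Fin N) (Fin N) ℂ) ∈ g 0 := by
  classical
  set M := Matrix (Fin N) (Fin N) ℂ with hM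
  obtain ⟨a, ha⟩ := hinternal.2 (((0 : M), (1 : M)))
  set s : Finset ℤ := DFinsupp.support a with hs
  set c : ℤ → M × M := fun j => ((a j : M × M)) with hc
  have hcmem : ∀ j, c j ∈ g j := fun j => (a j).2
  have hsum : ∑ j ∈ s, c j = ((0 : M), (1 : M)) := by
    rw [← ha, DirectSum.coeAddMonoidHom_eq_dfinsuppSum]
    rfl
  -- Step A : first components vanish
  have hAmem : ∀ j, (((c j).1, (0 : M)) : M × M) ∈ g j := fun j => hcompat j _ (hcmem j)
  have hsum1 : ∑ j ∈ s, (((c j).1, (0 : M)) : M × M) = 0 := by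
    have h1 : (∑ j ∈ s, (((c j).1, (0 : M)) : M × M))
        = ((∑ j ∈ s, c j).1, 0) := by
      apply Prod.ext
      · rw [Prod.fst_sum, Prod.fst_sum]
      · rw [Prod.snd_sum]
        simp
    rw [h1, hsum]
    rfl
  have hA : ∀ j, (c j).1 = 0 := by
    intro j
    by_cases hjs : j ∈ s
    · by_cases hj1 : j = 1
      · have h := homog_unique g hinternal s (fun j => (((c j).1, (0 : M)) : M × M))
          hAmem 0 0 (zero_mem _) hsum1 j hjs (by rw [hj1]; decide)
        exact congrArg Prod.fst h
      · have h := homog_unique g hinternal s (fun j => (((c j).1, (0 : M)) : M × M))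
          hAmem 1 0 (zero_mem _) hsum1 j hjs hj1
        exact congrArg Prod.fst h
    · have h0 : a j = 0 := DFinsupp.notMem_support_iff.mp hjs
      show ((a j : M × M)).1 = 0
      rw [h0]
      rfl
  set B : ℤ → M := fun j => (c j).2 with hB
  have hcB : ∀ j, c j = ((0 : M), B j) := fun j => Prod.ext (hA j) rfl
  have hBsum : ∑ j ∈ s, B j = 1 := by
    have := congrArg Prod.snd hsum
    rw [Prod.snd_sum] at this
    exact this
  -- Step C : bracket relations
  set P : Finset (ℤ × ℤ) := s ×ˢ s with hP
  have hCC : qBracket (((0 : M), (1 : M)) : M × M) ((0 : M), (1 : M)) = ((2 : M), (0 : M)) := by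
    unfold qBracket
    apply Prod.ext <;> simp [one_add_one_eq_two]
  have h2mem : (((2 : M), (0 : M)) : M × M) ∈ g 0 := by
    have h := Submodule.add_mem (g 0) hcenter hcenter
    have he : (((2 : M), (0 : M)) : M × M) = ((1 : M), (0 : M)) + ((1 : M), (0 : M)) := by
      apply Prod.ext <;> simp [one_add_one_eq_two]
    rwa [he]
  have hdouble : ∑ p ∈ P, qBracket (c p.1) (c p.2) = (((2 : M), (0 : M)) : M × M) := by
    rw [hP, Finset.sum_product, ← qBracket_sum_sum, hsum, hCC]
  set t : Finset ℤ := P.image (fun p => p.1 + p.2) with ht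
  set y : ℤ → M × M := fun k =>
    ∑ p ∈ P.filter (fun p => p.1 + p.2 = k), qBracket (c p.1) (c p.2) with hy
  have hymem : ∀ k, y k ∈ g k := by
    intro k
    apply Submodule.sum_mem
    rintro ⟨i, j⟩ hp
    rw [Finset.mem_filter] at hp
    have h := hbracket i j _ (hcmem i) _ (hcmem j)
    rwa [hp.2] at h
  have hysum : ∑ k ∈ t, y k = (((2 : M), (0 : M)) : M × M) := by
    rw [hy, ht, Finset.sum_fiberwise_of_maps_to (fun p hp => Finset.mem_image_of_mem _ hp)]
    exact hdouble
  have hyfilter : ∀ k, k ∉ t → y k = 0 := by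
    intro k hkt
    have hemp : P.filter (fun p => p.1 + p.2 = k) = ∅ :=
      Finset.filter_false_of_mem (fun p hp hpe => hkt (Finset.mem_image.mpr ⟨p, hp, hpe⟩))
    show ∑ p ∈ P.filter (fun p => p.1 + p.2 = k), qBracket (c p.1) (c p.2) = 0
    rw [hemp, Finset.sum_empty]
  have hyk : ∀ k, k ≠ 0 → y k = 0 := by
    intro k hk
    by_cases hkt : k ∈ t
    · exact homog_unique g hinternal t y hymem 0 _ h2mem hysum k hkt hk
    · exact hyfilter k hkt
  have hy0 : y 0 = (((2 : M), (0 : M)) : M × M) := by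
    by_cases h0t : 0 ∈ t
    · have h1 : ∑ k ∈ t, y k = ∑ k ∈ t, (if k = 0 then y 0 else 0) := by
        refine Finset.sum_congr rfl fun k _ => ?_
        by_cases h : k = 0
        · rw [if_pos h, h]
        · rw [if_neg h, hyk k h]
      rw [h1, Finset.sum_ite_eq' t 0 (fun _ => y 0), if_pos h0t] at hysum
      exact hysum
    · have h1 : ∑ k ∈ t, y k = 0 := by
        apply Finset.sum_eq_zero
        intro k hk
        exact hyk k (fun hk0 => h0t (hk0 ▸ hk))
      rw [h1] at hysum
      rw [hyfilter 0 h0t, ← hysum]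
  have hyall : ∀ k, y k = if k = 0 then (((2 : M), (0 : M)) : M × M) else 0 := by
    intro k
    by_cases h : k = 0
    · rw [if_pos h, h, hy0]
    · rw [if_neg h, hyk k h]
  set R : ℤ → M := fun k => ∑ p ∈ P.filter (fun p => p.1 + p.2 = k), B p.1 * B p.2 with hR
  have hqB : ∀ i j, qBracket (c i) (c j) = ((B i * B j + B j * B i : M), (0 : M)) := by
    intro i j
    rw [hcB i, hcB j]
    unfold qBracket
    apply Prod.ext <;> simp
  have hswap : ∀ k, ∑ p ∈ P.filter (fun p => p.1 + p.2 = k), B p.2 * B p.1 = R k := by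
    intro k
    rw [hR]
    apply Finset.sum_nbij' (fun p => Prod.swap p) (fun p => Prod.swap p) <;>
      simp [hP, Finset.mem_filter, Finset.mem_product, add_comm, and_comm] <;>
      (try intros) <;> simp_all [add_comm]
  have hyR : ∀ k, y k = ((R k + R k : M), (0 : M)) := by
    intro k
    have h1 : y k = ∑ p ∈ P.filter (fun p => p.1 + p.2 = k),
        (((B p.1 * B p.2 + B p.2 * B p.1 : M), (0 : M)) : M × M) := by
      show ∑ p ∈ P.filter (fun p => p.1 + p.2 = k), qBracket (c p.1) (c p.2) = _
      exact Finset.sum_congr rfl fun p _ => hqB p.1 p.2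
    rw [h1]
    apply Prod.ext
    · rw [Prod.fst_sum]
      simp only
      rw [Finset.sum_add_distrib, hswap k, hR]
    · rw [Prod.snd_sum]
      simp
  have htwoM : (2 : ℂ) • (1 : M) = (2 : M) := by
    rw [← Algebra.algebraMap_eq_smul_one]
    exact map_ofNat (algebraMap ℂ (Matrix (Fin N) (Fin N) ℂ)) 2
  have hRval : ∀ k, R k = if k = 0 then (1 : M) else 0 := by
    intro k
    have h1 : ((R k + R k : M), (0 : M)) = (if k = 0 then (((2 : M), (0 : M)) : M × M) else 0) := by
      rw [← hyR, hyall]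
    have h2 : R k + R k = (if k = 0 then (2 : M) else 0) := by
      have := congrArg Prod.fst h1
      simpa [apply_ite Prod.fst] using this
    have h3 : (2 : ℂ) • R k = (2 : ℂ) • (if k = 0 then (1 : M) else 0) := by
      rw [two_smul]
      rw [h2]
      by_cases h : k = 0
      · rw [if_pos h, if_pos h, htwoM]
      · rw [if_neg h, if_neg h, smul_zero]
    exact smul_right_injective M (two_ne_zero) h3
  -- Step D : pass to RatFunc ℂ
  set Φ : Matrix (Fin N) (Fin N) ℂ →+* Matrix (Fin N) (Fin N) (RatFunc ℂ) :=
    (RatFunc.C (K := ℂ)).mapMatrix with hΦ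
  have hXne : (RatFunc.X : RatFunc ℂ) ≠ 0 := RatFunc.X_ne_zero
  set F : Matrix (Fin N) (Fin N) (RatFunc ℂ) := ∑ j ∈ s, (RatFunc.X : RatFunc ℂ) ^ (j : ℤ) • Φ (B j) with hF
  have hFF : F * F = 1 := by
    have h1 : F * F = ∑ p ∈ P, (RatFunc.X : RatFunc ℂ) ^ (p.1 + p.2) • Φ (B p.1 * B p.2) := by
      rw [hF, Finset.sum_mul_sum, hP, Finset.sum_product]
      refine Finset.sum_congr rfl fun i _ => Finset.sum_congr rfl fun j _ => ?_
      rw [smul_mul_smul_comm, ← zpow_add₀ hXne, map_mul]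
    have h2a : ∑ p ∈ P, (RatFunc.X : RatFunc ℂ) ^ (p.1 + p.2) • Φ (B p.1 * B p.2)
        = ∑ k ∈ t, ∑ p ∈ P.filter (fun p => p.1 + p.2 = k),
            (RatFunc.X : RatFunc ℂ) ^ (p.1 + p.2) • Φ (B p.1 * B p.2) :=
      (Finset.sum_fiberwise_of_maps_to
        (fun p hp => Finset.mem_image_of_mem (fun p => p.1 + p.2) hp) _).symm
    have h2 : F * F = ∑ k ∈ t, (RatFunc.X : RatFunc ℂ) ^ (k : ℤ) • Φ (R k) := by
      rw [h1, h2a]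
      refine Finset.sum_congr rfl fun k _ => ?_
      rw [hR, map_sum, Finset.smul_sum]
      refine Finset.sum_congr rfl fun p hp => ?_
      rw [Finset.mem_filter] at hp
      rw [hp.2]
    rw [h2]
    have h3 : ∀ k ∈ t, (RatFunc.X : RatFunc ℂ) ^ (k : ℤ) • Φ (R k)
        = if k = 0 then Φ (R 0) else 0 := by
      intro k _
      by_cases h : k = 0
      · rw [if_pos h, h]
        simp
      · rw [if_neg h, hRval k, if_neg h, map_zero, smul_zero]
    rw [Finset.sum_congr rfl h3, Finset.sum_ite_eq' t 0 (fun _ => Φ (R 0))]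
    by_cases h0t : 0 ∈ t
    · rw [if_pos h0t, hRval 0, if_pos rfl, map_one]
    · rw [if_neg h0t]
      have hone : (1 : M) = 0 := by
        have hR0 : R 0 = 0 := by
          have hemp : P.filter (fun p => p.1 + p.2 = (0:ℤ)) = ∅ :=
            Finset.filter_false_of_mem
              (fun p hp hpe => h0t (Finset.mem_image.mpr ⟨p, hp, hpe⟩))
          rw [hR]
          show ∑ p ∈ P.filter (fun p => p.1 + p.2 = (0:ℤ)), B p.1 * B p.2 = 0
          rw [hemp, Finset.sum_empty]
        have := hRval 0
        rw [if_pos rfl, hR0] at this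
        exact this.symm
      calc (0 : Matrix (Fin N) (Fin N) (RatFunc ℂ)) = Φ 0 := (map_zero Φ).symm
        _ = Φ 1 := by rw [← hone]
        _ = 1 := map_one Φ
  -- Step E : the idempotent (1-F)/2 has rank 0, hence F = 1
  have h2K : (2 : RatFunc ℂ) ≠ 0 := by
    intro h
    have h2a : (2 : RatFunc ℂ) = algebraMap (Polynomial ℂ) (RatFunc ℂ) 2 := (map_ofNat _ 2).symm
    rw [h2a, ← map_zero (algebraMap (Polynomial ℂ) (RatFunc ℂ))] at h
    exact two_ne_zero (RatFunc.algebraMap_injective ℂ h)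
  have htrΦ : ∀ A : Matrix (Fin N) (Fin N) ℂ,
      Matrix.trace (Φ A) = RatFunc.C (Matrix.trace A) := by
    intro A
    simp [Matrix.trace, Matrix.diag, hΦ, RingHom.mapMatrix_apply, Matrix.map_apply, map_sum]
  set E : Matrix (Fin N) (Fin N) (RatFunc ℂ) := (2 : RatFunc ℂ)⁻¹ • (1 - F) with hE
  have hEE : E * E = E := by
    have hexp : (1 - F) * (1 - F) = (1 - F) + (1 - F) := by
      have h6 : (1 - F) * (1 - F) = 1 - F - F + F * F := by noncomm_ring
      rw [h6, hFF]
      noncomm_ring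
    rw [hE, smul_mul_smul_comm, hexp, smul_add, ← add_smul]
    congr 1
    rw [← two_mul, ← mul_assoc, mul_inv_cancel₀ h2K, one_mul]
  obtain ⟨r, hrtr, hr0⟩ := idem_trace hEE
  have htrE : Matrix.trace E
      = (2 : RatFunc ℂ)⁻¹ * ((N : RatFunc ℂ) - Matrix.trace F) := by
    rw [hE, Matrix.trace_smul, Matrix.trace_sub, Matrix.trace_one, Fintype.card_fin,
      smul_eq_mul]
  have htrF : Matrix.trace F
      = ∑ j ∈ s, RatFunc.C (Matrix.trace (B j)) * (RatFunc.X : RatFunc ℂ) ^ (j : ℤ) := by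
    rw [hF, Matrix.trace_sum]
    refine Finset.sum_congr rfl fun j _ => ?_
    rw [Matrix.trace_smul, htrΦ, smul_eq_mul, mul_comm]
  have htrFd : Matrix.trace F = RatFunc.C ((N : ℂ) - 2 * r) := by
    have h7 : (2 : RatFunc ℂ)⁻¹ * ((N : RatFunc ℂ) - Matrix.trace F) = (r : RatFunc ℂ) := by
      rw [← htrE, hrtr]
    have h8 : (N : RatFunc ℂ) - Matrix.trace F = 2 * (r : RatFunc ℂ) := by
      field_simp at h7
      linear_combination h7
    have h9 : Matrix.trace F = (N : RatFunc ℂ) - 2 * (r : RatFunc ℂ) := by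
      linear_combination -h8
    rw [h9, map_sub, map_mul, map_natCast, map_natCast, map_ofNat]
  have hext := ratfunc_ext s (fun j => Matrix.trace (B j)) ((N : ℂ) - 2 * r)
    (by rw [← htrF, htrFd])
  have hdN : (N : ℂ) - 2 * r = (N : ℂ) := by
    rw [hext.2]
    rw [← Matrix.trace_sum, hBsum, Matrix.trace_one, Fintype.card_fin]
  have hrz : r = 0 := by
    have h10 : (r : ℂ) = 0 := by
      have : (2 : ℂ) * r = 0 := by linear_combination -hdN
      have h2C : (2 : ℂ) ≠ 0 := two_ne_zero
      exact (mul_eq_zero.mp this).resolve_left h2C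
    exact_mod_cast h10
  have hEz : E = 0 := hr0 hrz
  have hF1 : F = 1 := by
    have h11 : (1 : Matrix (Fin N) (Fin N) (RatFunc ℂ)) - F = 0 := by
      rcases smul_eq_zero.mp (hE ▸ hEz) with h | h
      · exact absurd h (inv_ne_zero h2K)
      · exact h
    exact (sub_eq_zero.mp h11).symm
  -- Step F : extract coefficients
  have hBzero : ∀ j ∈ s, j ≠ (0 : ℤ) → B j = 0 := by
    intro j0 hj0 hne
    ext u v
    have hFe := congrArg (fun (A : Matrix (Fin N) (Fin N) (RatFunc ℂ)) => A u v) hF1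
    simp only [hF, Matrix.sum_apply, Matrix.smul_apply, hΦ, RingHom.mapMatrix_apply,
      Matrix.map_apply, smul_eq_mul] at hFe
    have hone : (1 : Matrix (Fin N) (Fin N) (RatFunc ℂ)) u v
        = RatFunc.C ((1 : Matrix (Fin N) (Fin N) ℂ) u v) := by
      by_cases h : u = v <;> simp [Matrix.one_apply, h]
    have heq : ∑ j ∈ s, RatFunc.C ((B j) u v) * (RatFunc.X : RatFunc ℂ) ^ (j : ℤ)
        = RatFunc.C ((1 : Matrix (Fin N) (Fin N) ℂ) u v) := by
      rw [← hone, ← hFe]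
      exact Finset.sum_congr rfl fun j _ => mul_comm _ _
    have := (ratfunc_ext s (fun j => (B j) u v) _ heq).1 j0 hj0 hne
    exact this
  -- Conclusion
  have hczero : ∀ j ∈ s, j ≠ (0 : ℤ) → c j = 0 := by
    intro j hj hne
    rw [hcB j, hBzero j hj hne]
    rfl
  have hfinal : ∑ j ∈ s, c j = if (0 : ℤ) ∈ s then c 0 else 0 := by
    have h12 : ∑ j ∈ s, c j = ∑ j ∈ s, (if j = 0 then c 0 else 0) := by
      refine Finset.sum_congr rfl fun j hj => ?_
      by_cases h : j = 0
      · rw [if_pos h, h]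
      · rw [if_neg h, hczero j hj h]
    rw [h12, Finset.sum_ite_eq' s 0 (fun _ => c 0)]
  rw [hfinal] at hsum
  by_cases h0s : (0 : ℤ) ∈ s
  · rw [if_pos h0s] at hsum
    rw [← hsum]
    exact hcmem 0
  · rw [if_neg h0s] at hsum
    rw [← hsum]
    exact zero_mem _
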